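/- Let δ ∈ (0,1), σ > 0, n ≥ 1. Let a₁, …, a_n and b₁, …, b_n be real numbers, let ε₁, …, ε_n be independent random variables each distributed as the Gaussian N(0, σ²), and set y_j = b_j + ε_j. Let T be an arbitrary index set and for each t ∈ T let L_{t,1}, …, L_{t,n} and U_{t,1}, …, U_{t,n} be real numbers with L_{t,j} ≤ a_j ≤ U_{t,j} for all j. Then with probability at least 1 − δ/4, simultaneously for all t ∈ T and all j = 1, …, n: |b_j − a_j| ≤ √(2σ² log(8n/δ)) + max(|y_j − U_{t,j}|, |y_j − L_{t,j}|). -/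

import Mathlib

open MeasureTheory ProbabilityTheory


lemma tail_one_side (σ : ℝ) (hσ : 0 < σ) (c : ℝ) (hc : 0 ≤ c) :
    ∫ x in Set.Ici c, gaussianPDFReal 0 ⟨σ ^ 2, sq_nonneg σ⟩ x
      ≤ Real.exp (-c ^ 2 / (2 * σ ^ 2)) := by
  set v : NNReal := ⟨σ ^ 2, sq_nonneg σ⟩
  have hv : v ≠ 0 := by
    simp only [v, ← NNReal.coe_ne_zero, NNReal.coe_mk]
    exact NNReal.coe_ne_zero.mp (pow_ne_zero 2 hσ.ne')
  have hstep : ∀ x ∈ Set.Ici c,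
      gaussianPDFReal 0 v x ≤ Real.exp (-c ^ 2 / (2 * σ ^ 2)) * gaussianPDFReal c v x := by
    intro x hx
    simp only [Set.mem_Ici] at hx
    simp only [gaussianPDFReal, sub_zero]
    rw [mul_left_comm]
    gcongr
    rw [← Real.exp_add]
    apply Real.exp_le_exp.2
    have hv' : (v : ℝ) = σ ^ 2 := rfl
    rw [hv', ← add_div, div_le_div_iff₀ (by positivity) (by positivity)]
    nlinarith [mul_nonneg (mul_nonneg hc (sub_nonneg.2 hx)) (sq_nonneg σ)]
  calc ∫ x in Set.Ici c, gaussianPDFReal 0 v x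
      ≤ ∫ x in Set.Ici c, Real.exp (-c ^ 2 / (2 * σ ^ 2)) * gaussianPDFReal c v x := by
        refine setIntegral_mono_on ((integrable_gaussianPDFReal 0 v).integrableOn)
          (((integrable_gaussianPDFReal c v).const_mul _).integrableOn)
          measurableSet_Ici hstep
    _ = Real.exp (-c ^ 2 / (2 * σ ^ 2)) * ∫ x in Set.Ici c, gaussianPDFReal c v x := by
        rw [integral_const_mul]
    _ ≤ Real.exp (-c ^ 2 / (2 * σ ^ 2)) * ∫ x, gaussianPDFReal c v x := by
        gcongr
        exact ae_of_all _ (gaussianPDFReal_nonneg c v)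
        exact integrable_gaussianPDFReal c v
        exact Measure.restrict_le_self
    _ = Real.exp (-c ^ 2 / (2 * σ ^ 2)) := by
        rw [integral_gaussianPDFReal_eq_one c hv, mul_one]

lemma tail_left (σ : ℝ) (hσ : 0 < σ) (c : ℝ) (hc : 0 ≤ c) :
    ∫ x in Set.Iic (-c), gaussianPDFReal 0 ⟨σ ^ 2, sq_nonneg σ⟩ x
      ≤ Real.exp (-c ^ 2 / (2 * σ ^ 2)) := by
  set v : NNReal := ⟨σ ^ 2, sq_nonneg σ⟩
  have hv : v ≠ 0 := by
    simp only [v, ← NNReal.coe_ne_zero, NNReal.coe_mk]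
    exact NNReal.coe_ne_zero.mp (pow_ne_zero 2 hσ.ne')
  have hstep : ∀ x ∈ Set.Iic (-c),
      gaussianPDFReal 0 v x ≤ Real.exp (-c ^ 2 / (2 * σ ^ 2)) * gaussianPDFReal (-c) v x := by
    intro x hx
    simp only [Set.mem_Iic] at hx
    simp only [gaussianPDFReal, sub_zero, sub_neg_eq_add]
    rw [mul_left_comm]
    gcongr
    rw [← Real.exp_add]
    apply Real.exp_le_exp.2
    have hv' : (v : ℝ) = σ ^ 2 := rfl
    rw [hv', ← add_div, div_le_div_iff₀ (by positivity) (by positivity)]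
    nlinarith [mul_nonneg (mul_nonneg hc (by linarith : (0:ℝ) ≤ -(x + c))) (sq_nonneg σ)]
  calc ∫ x in Set.Iic (-c), gaussianPDFReal 0 v x
      ≤ ∫ x in Set.Iic (-c), Real.exp (-c ^ 2 / (2 * σ ^ 2)) * gaussianPDFReal (-c) v x := by
        refine setIntegral_mono_on ((integrable_gaussianPDFReal 0 v).integrableOn)
          (((integrable_gaussianPDFReal (-c) v).const_mul _).integrableOn)
          measurableSet_Iic hstep
    _ = Real.exp (-c ^ 2 / (2 * σ ^ 2)) * ∫ x in Set.Iic (-c), gaussianPDFReal (-c) v x := by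
        rw [integral_const_mul]
    _ ≤ Real.exp (-c ^ 2 / (2 * σ ^ 2)) * ∫ x, gaussianPDFReal (-c) v x := by
        gcongr
        exact ae_of_all _ (gaussianPDFReal_nonneg (-c) v)
        exact integrable_gaussianPDFReal (-c) v
        exact Measure.restrict_le_self
    _ = Real.exp (-c ^ 2 / (2 * σ ^ 2)) := by
        rw [integral_gaussianPDFReal_eq_one (-c) hv, mul_one]

lemma gauss_tail_abs (σ : ℝ) (hσ : 0 < σ) (c : ℝ) (hc : 0 ≤ c) :
    gaussianReal 0 ⟨σ ^ 2, sq_nonneg σ⟩ {x | c < |x|}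
      ≤ ENNReal.ofReal (2 * Real.exp (-c ^ 2 / (2 * σ ^ 2))) := by
  set v : NNReal := ⟨σ ^ 2, sq_nonneg σ⟩
  have hv : v ≠ 0 := by
    simp only [v, ← NNReal.coe_ne_zero, NNReal.coe_mk]
    exact NNReal.coe_ne_zero.mp (pow_ne_zero 2 hσ.ne')
  have hsub : {x : ℝ | c < |x|} ⊆ Set.Ici c ∪ Set.Iic (-c) := by
    intro x hx
    simp only [Set.mem_setOf_eq] at hx
    rcases lt_abs.mp hx with h | h
    · exact Or.inl (le_of_lt h)
    · exact Or.inr (by simpa [Set.mem_Iic] using (by linarith : x ≤ -c))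
  calc gaussianReal 0 v {x | c < |x|}
      ≤ gaussianReal 0 v (Set.Ici c ∪ Set.Iic (-c)) := measure_mono hsub
    _ ≤ gaussianReal 0 v (Set.Ici c) + gaussianReal 0 v (Set.Iic (-c)) :=
        measure_union_le _ _
    _ ≤ ENNReal.ofReal (Real.exp (-c ^ 2 / (2 * σ ^ 2)))
        + ENNReal.ofReal (Real.exp (-c ^ 2 / (2 * σ ^ 2))) := by
        gcongr
        · rw [gaussianReal_apply_eq_integral 0 hv]
          exact ENNReal.ofReal_le_ofReal (tail_one_side σ hσ c hc)
        · rw [gaussianReal_apply_eq_integral 0 hv]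
          exact ENNReal.ofReal_le_ofReal (tail_left σ hσ c hc)
    _ = ENNReal.ofReal (2 * Real.exp (-c ^ 2 / (2 * σ ^ 2))) := by
        rw [← ENNReal.ofReal_add (Real.exp_nonneg _) (Real.exp_nonneg _)]
        ring_nf

/-- The probabilistic content of Lemma 1 (estimate_di): with `y_j = b_j + ε_j`
for independent `ε_j ~ N(0,σ²)`, with probability at least `1 − δ/4`, simultaneously for all
`t` in an arbitrary index set and all `j`,
`|b_j − a_j| ≤ √(2σ² log (8n/δ)) + max (|y_j − U_{t,j}|) (|y_j − L_{t,j}|)`. -/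
theorem stmt_13 {Ω : Type*} [MeasurableSpace Ω] (P : Measure Ω) [IsProbabilityMeasure P]
    (δ σ : ℝ) (hδ : δ ∈ Set.Ioo (0 : ℝ) 1) (hσ : 0 < σ)
    (n : ℕ) (hn : 1 ≤ n) (a b : Fin n → ℝ)
    (ε : Fin n → Ω → ℝ) (hεm : ∀ j, Measurable (ε j))
    (hindep : iIndepFun ε P)
    (hdist : ∀ j, P.map (ε j) = gaussianReal 0 ⟨σ ^ 2, sq_nonneg σ⟩)
    {ι : Type*} (L U : ι → Fin n → ℝ)
    (hLU : ∀ t j, L t j ≤ a j ∧ a j ≤ U t j) :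
    ENNReal.ofReal (1 - δ / 4) ≤
      P {ω | ∀ (t : ι) (j : Fin n),
        |b j - a j| ≤ Real.sqrt (2 * σ ^ 2 * Real.log (8 * n / δ)) +
          max |(b j + ε j ω) - U t j| |(b j + ε j ω) - L t j|} := by
  obtain ⟨hδ0, hδ1⟩ := hδ
  have hn0 : (0:ℝ) < n := by exact_mod_cast hn
  have hn1 : (1:ℝ) ≤ n := by exact_mod_cast hn
  set c : ℝ := Real.sqrt (2 * σ ^ 2 * Real.log (8 * n / δ)) with hc_def
  have hratio : (1:ℝ) ≤ 8 * n / δ := by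
    rw [le_div_iff₀ hδ0]; nlinarith
  have hlog : 0 ≤ Real.log (8 * n / δ) := Real.log_nonneg hratio
  have hc0 : 0 ≤ c := Real.sqrt_nonneg _
  have hc2 : c ^ 2 = 2 * σ ^ 2 * Real.log (8 * n / δ) :=
    Real.sq_sqrt (by positivity)
  have hexp : Real.exp (-c ^ 2 / (2 * σ ^ 2)) = δ / (8 * n) := by
    rw [hc2]
    have h1 : -(2 * σ ^ 2 * Real.log (8 * ↑n / δ)) / (2 * σ ^ 2)
        = -Real.log (8 * ↑n / δ) := by
      field_simp
    rw [h1, Real.exp_neg, Real.exp_log (by positivity), inv_div]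
  have hS : MeasurableSet {x : ℝ | c < |x|} :=
    (isOpen_lt continuous_const continuous_abs).measurableSet
  have hEj : ∀ j, MeasurableSet {ω | c < |ε j ω|} := fun j => (hεm j) hS
  have hPEj : ∀ j, P {ω | c < |ε j ω|} ≤ ENNReal.ofReal (δ / (4 * n)) := by
    intro j
    have hmap : P {ω | c < |ε j ω|} = (P.map (ε j)) {x | c < |x|} := by
      rw [Measure.map_apply (hεm j) hS]; rfl
    rw [hmap, hdist j]
    refine le_trans (gauss_tail_abs σ hσ c hc0) ?_
    apply ENNReal.ofReal_le_ofReal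
    rw [hexp]
    rw [show 2 * (δ / (8 * ↑n)) = δ / (4 * ↑n) by ring]
  set Bad : Set Ω := ⋃ j, {ω | c < |ε j ω|} with hBad_def
  have hBadM : MeasurableSet Bad := MeasurableSet.iUnion hEj
  have hPBad : P Bad ≤ ENNReal.ofReal (δ / 4) := by
    refine le_trans (measure_iUnion_le _) ?_
    calc (∑' j : Fin n, P {ω | c < |ε j ω|})
        ≤ ∑' (_ : Fin n), ENNReal.ofReal (δ / (4 * n)) :=
          ENNReal.tsum_le_tsum fun j => hPEj j
      _ = (n : ENNReal) * ENNReal.ofReal (δ / (4 * n)) := by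
          rw [tsum_fintype]
          simp [Finset.sum_const, Finset.card_univ, nsmul_eq_mul]
      _ = ENNReal.ofReal (δ / 4) := by
          rw [← ENNReal.ofReal_natCast n, ← ENNReal.ofReal_mul (by positivity)]
          congr 1
          field_simp
  have hsubset : Badᶜ ⊆ {ω | ∀ (t : ι) (j : Fin n),
      |b j - a j| ≤ c + max |(b j + ε j ω) - U t j| |(b j + ε j ω) - L t j|} := by
    intro ω hω t j
    simp only [hBad_def, Set.mem_compl_iff, Set.mem_iUnion, Set.mem_setOf_eq,
      not_exists, not_lt] at hω
    obtain ⟨h1, h2⟩ := hLU t j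
    set y := b j + ε j ω with hy
    have hya : |y - a j| ≤ max |y - U t j| |y - L t j| := by
      rcases le_total (a j) y with h | h
      · calc |y - a j| = y - a j := abs_of_nonneg (by linarith)
          _ ≤ y - L t j := by linarith
          _ ≤ |y - L t j| := le_abs_self _
          _ ≤ max |y - U t j| |y - L t j| := le_max_right _ _
      · calc |y - a j| = a j - y := abs_sub_comm y (a j) ▸ abs_of_nonneg (by linarith)
          _ ≤ U t j - y := by linarith
          _ ≤ |y - U t j| := (abs_sub_comm y (U t j)) ▸ le_abs_self _
          _ ≤ max |y - U t j| |y - L t j| := le_max_left _ _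
    have htri : |b j - a j| ≤ |ε j ω| + |y - a j| := by
      have heq : b j - a j = -(ε j ω) + (y - a j) := by rw [hy]; ring
      rw [heq]
      exact (abs_add_le _ _).trans (by rw [abs_neg])
    exact htri.trans (add_le_add (hω j) hya)
  calc ENNReal.ofReal (1 - δ / 4)
      = 1 - ENNReal.ofReal (δ / 4) := by
        rw [ENNReal.ofReal_sub _ (by positivity), ENNReal.ofReal_one]
    _ ≤ 1 - P Bad := tsub_le_tsub_left hPBad 1
    _ = P Badᶜ := by rw [measure_compl hBadM (measure_ne_top P _), measure_univ]
    _ ≤ _ := measure_mono hsubset
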